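/- With U_∨ : H(k₁+k₂) → H(k₁) ⊕ H(k₂) defined on kernel elements by U_∨ (k₁+k₂)_x = (k₁)_x ⊕ (k₂)_x, and U_∧ : H(k₁)∧H(k₂) → H(k₁) ⊕ H(k₂) defined by U_∧ h = h ⊕ (−h), both maps are isometries and H(k₁) ⊕ H(k₂) decomposes as the orthogonal direct sum of the ranges of U_∨ and U_∧. -/

import Mathlib

open scoped InnerProductSpace

private lemma inner_linearCombination_aux {X E : Type*} [NormedAddCommGroup E]
    [InnerProductSpace ℂ E] (v : X → E) (c c' : X →₀ ℂ) :
    ⟪Finsupp.linearCombination ℂ v c, Finsupp.linearCombination ℂ v c'⟫_ℂ =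
      ∑ x ∈ c.support, ∑ y ∈ c'.support,
        (starRingEnd ℂ) (c x) * c' y * ⟪v x, v y⟫_ℂ := by
  rw [Finsupp.linearCombination_apply, Finsupp.linearCombination_apply, Finsupp.sum, Finsupp.sum,
    sum_inner]
  refine Finset.sum_congr rfl fun x _ => ?_
  rw [inner_sum]
  refine Finset.sum_congr rfl fun y _ => ?_
  rw [inner_smul_left, inner_smul_right]; ring

set_option maxHeartbeats 1000000 in
/-- Let `H(k₁)`, `H(k₂)` be RKHSs of functions on a set `X` (realized by
injective function-realization maps `j₁, j₂` and kernel maps `k₁, k₂`), and let `H(k₁ + k₂)` be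
the RKHS of the sum kernel (realized as a Hilbert space `H₀` with injective `j₀` and kernel map
`k₀` whose Gram matrix is the sum of those of `k₁` and `k₂`).  Then the map `U_∨` sending kernel
elements `(k₁+k₂)_x ↦ (k₁)_x ⊕ (k₂)_x` extends to a linear isometry
`U_∨ : H(k₁+k₂) → H(k₁) ⊕₂ H(k₂)`; the "flip" map `U_∧ : h ↦ h ⊕ (−h)` (i.e. `(f,g) ↦ (f,−g)` on
pairs) is an isometry; and `H(k₁) ⊕₂ H(k₂)` is the orthogonal direct sum of the ranges of `U_∨`
and `U_∧`: the orthogonal complement of `range U_∨` is exactly the set of pairs `q` with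
`j₁ q.1 = − j₂ q.2`, which is the range of `U_∧` on the intersection space. -/
theorem rkhs_join_meet_orthogonal_decomposition
    {X H₁ H₂ H₀ : Type*}
    [NormedAddCommGroup H₁] [InnerProductSpace ℂ H₁] [CompleteSpace H₁]
    [NormedAddCommGroup H₂] [InnerProductSpace ℂ H₂] [CompleteSpace H₂]
    [NormedAddCommGroup H₀] [InnerProductSpace ℂ H₀] [CompleteSpace H₀]
    (j₁ : H₁ →ₗ[ℂ] (X → ℂ)) (j₂ : H₂ →ₗ[ℂ] (X → ℂ)) (j₀ : H₀ →ₗ[ℂ] (X → ℂ))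
    (hj₁ : Function.Injective j₁) (hj₂ : Function.Injective j₂)
    (hj₀ : Function.Injective j₀)
    (k₁ : X → H₁) (k₂ : X → H₂) (k₀ : X → H₀)
    (hk₁ : ∀ (f : H₁) (x : X), j₁ f x = ⟪k₁ x, f⟫_ℂ)
    (hk₂ : ∀ (g : H₂) (x : X), j₂ g x = ⟪k₂ x, g⟫_ℂ)
    (hk₀ : ∀ (f : H₀) (x : X), j₀ f x = ⟪k₀ x, f⟫_ℂ)
    (hsum : ∀ x y : X, ⟪k₀ x, k₀ y⟫_ℂ = ⟪k₁ x, k₁ y⟫_ℂ + ⟪k₂ x, k₂ y⟫_ℂ) :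
    (∃ Uvee : H₀ →ₗᵢ[ℂ] WithLp 2 (H₁ × H₂),
      (∀ x : X, Uvee (k₀ x) = (WithLp.equiv 2 (H₁ × H₂)).symm (k₁ x, k₂ x)) ∧
      ∀ q : WithLp 2 (H₁ × H₂),
        q ∈ (LinearMap.range Uvee.toLinearMap)ᗮ ↔
          j₁ (WithLp.equiv 2 (H₁ × H₂) q).1 = - j₂ (WithLp.equiv 2 (H₁ × H₂) q).2) ∧
    ∀ p : WithLp 2 (H₁ × H₂),
      ‖(WithLp.equiv 2 (H₁ × H₂)).symm
        ((WithLp.equiv 2 (H₁ × H₂) p).1, -(WithLp.equiv 2 (H₁ × H₂) p).2)‖ = ‖p‖ := by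
  classical
  set K := WithLp 2 (H₁ × H₂) with hK
  set κ : X → K := fun x => (WithLp.equiv 2 (H₁ × H₂)).symm (k₁ x, k₂ x) with hκ
  have hκ_inner : ∀ x y, ⟪κ x, κ y⟫_ℂ = ⟪k₁ x, k₁ y⟫_ℂ + ⟪k₂ x, k₂ y⟫_ℂ := by
    intro x y
    rw [WithLp.prod_inner_apply]
    simp [hκ]
  have hκq : ∀ (x : X) (q : K), ⟪κ x, q⟫_ℂ = j₁ q.fst x + j₂ q.snd x := by
    intro x q
    rw [WithLp.prod_inner_apply, hk₁, hk₂]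
    simp [hκ]
  set a : (X →₀ ℂ) →ₗ[ℂ] H₀ := Finsupp.linearCombination ℂ k₀ with ha
  set b : (X →₀ ℂ) →ₗ[ℂ] K := Finsupp.linearCombination ℂ κ with hb
  have hab : ∀ c c' : X →₀ ℂ, ⟪a c, a c'⟫_ℂ = ⟪b c, b c'⟫_ℂ := by
    intro c c'
    rw [ha, hb, inner_linearCombination_aux, inner_linearCombination_aux]
    exact Finset.sum_congr rfl fun x _ => Finset.sum_congr rfl fun y _ => by
      rw [hsum, hκ_inner]
  have hker : LinearMap.ker a ≤ LinearMap.ker b := by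
    intro c hc
    rw [LinearMap.mem_ker] at hc ⊢
    have h0 : ⟪b c, b c⟫_ℂ = 0 := by rw [← hab, hc, inner_zero_left]
    exact inner_self_eq_zero.mp h0
  set D : Submodule ℂ H₀ := LinearMap.range a with hD
  have hsx : ∀ x : X, a (Finsupp.single x 1) = k₀ x := by
    intro x; rw [ha, Finsupp.linearCombination_single, one_smul]
  have hmemD : ∀ x, k₀ x ∈ D := fun x => ⟨Finsupp.single x 1, hsx x⟩
  have hD_dense : Dense (D : Set H₀) := by
    rw [Submodule.dense_iff_topologicalClosure_eq_top,
      Submodule.topologicalClosure_eq_top_iff, Submodule.eq_bot_iff]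
    intro f hf
    apply hj₀
    rw [map_zero]
    funext x
    have h0 : ⟪k₀ x, f⟫_ℂ = 0 :=
      (Submodule.mem_orthogonal _ _).mp hf (k₀ x) (hmemD x)
    rw [hk₀, h0]; rfl
  set f₁ : ((X →₀ ℂ) ⧸ LinearMap.ker a) →ₗ[ℂ] K := (LinearMap.ker a).liftQ b hker with hf₁
  set eq₁ : ((X →₀ ℂ) ⧸ LinearMap.ker a) ≃ₗ[ℂ] LinearMap.range a := a.quotKerEquivRange with heq₁
  set f₀ : D →ₗ[ℂ] K := f₁ ∘ₗ (eq₁.symm : (LinearMap.range a) →ₗ[ℂ] _) with hf₀def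
  have hf₀ : ∀ c : X →₀ ℂ, f₀ ⟨a c, LinearMap.mem_range_self a c⟩ = b c := by
    intro c
    have h1 : eq₁ (Submodule.Quotient.mk c) = ⟨a c, LinearMap.mem_range_self a c⟩ :=
      Subtype.ext (a.quotKerEquivRange_apply_mk c)
    have h2 : eq₁.symm ⟨a c, LinearMap.mem_range_self a c⟩ = Submodule.Quotient.mk c := by
      rw [LinearEquiv.symm_apply_eq, h1]
    rw [hf₀def]
    simp only [LinearMap.coe_comp, LinearEquiv.coe_coe, Function.comp_apply, h2, hf₁,
      Submodule.liftQ_apply]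
  have hf₀_norm : ∀ d : D, ‖f₀ d‖ = ‖d‖ := by
    rintro ⟨v, hv⟩
    obtain ⟨c, rfl⟩ := hv
    rw [hf₀ c]
    have h2 : ‖a c‖ ^ 2 = ‖b c‖ ^ 2 := by
      rw [← @inner_self_eq_norm_sq ℂ, ← @inner_self_eq_norm_sq ℂ, hab]
    have h3 : ‖(⟨a c, LinearMap.mem_range_self a c⟩ : D)‖ = ‖a c‖ := rfl
    rw [h3]
    nlinarith [norm_nonneg (a c), norm_nonneg (b c)]
  set F₀ : D →ₗᵢ[ℂ] K := ⟨f₀, hf₀_norm⟩ with hF₀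
  have h_dense : DenseRange (D.subtypeL) := by
    have hr : Set.range (D.subtypeL) = (D : Set H₀) := Subtype.range_coe
    rw [DenseRange, hr]
    exact hD_dense
  have h_unif : IsUniformInducing (D.subtypeL) := isometry_subtype_coe.isUniformInducing
  set U : H₀ →L[ℂ] K :=
    ContinuousLinearMap.extend F₀.toContinuousLinearMap D.subtypeL with hU
  have hU_d : ∀ d : D, U (d : H₀) = f₀ d := fun d =>
    ContinuousLinearMap.extend_eq (f := F₀.toContinuousLinearMap) (e := D.subtypeL) h_dense h_unif d
  have hU_norm : ∀ f : H₀, ‖U f‖ = ‖f‖ := by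
    intro f
    refine h_dense.induction_on f
      (isClosed_eq (continuous_norm.comp U.continuous) continuous_norm) ?_
    intro d
    have : U (D.subtypeL d) = f₀ d := hU_d d
    rw [this, hf₀_norm]
    rfl
  set Uvee : H₀ →ₗᵢ[ℂ] K := ⟨U.toLinearMap, hU_norm⟩ with hUvee
  have hUk : ∀ x : X, Uvee (k₀ x) = κ x := by
    intro x
    have h2 := hU_d ⟨a (Finsupp.single x 1), LinearMap.mem_range_self a _⟩
    rw [hf₀ (Finsupp.single x 1)] at h2
    have h3 : b (Finsupp.single x 1) = κ x := by
      rw [hb, Finsupp.linearCombination_single, one_smul]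
    have h4 : Uvee (k₀ x) = U (a (Finsupp.single x 1)) := by rw [hsx x]; rfl
    rw [h4, h2, h3]
  refine ⟨⟨Uvee, fun x => hUk x, fun q => ?_⟩, ?_⟩
  · have hq1 : (WithLp.equiv 2 (H₁ × H₂) q).1 = q.fst := rfl
    have hq2 : (WithLp.equiv 2 (H₁ × H₂) q).2 = q.snd := rfl
    rw [hq1, hq2]
    constructor
    · intro hq
      funext x
      have h0 : ⟪Uvee (k₀ x), q⟫_ℂ = 0 :=
        (Submodule.mem_orthogonal _ _).mp hq (Uvee (k₀ x)) ⟨k₀ x, rfl⟩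
      rw [hUk x, hκq x q] at h0
      have : j₁ q.fst x = - j₂ q.snd x := by linear_combination h0
      simpa using this
    · intro hq
      have hpt : ∀ x : X, j₁ q.fst x + j₂ q.snd x = 0 := by
        intro x
        have := congrFun hq x
        simp only [Pi.neg_apply] at this
        rw [this]; ring
      have hbq : ∀ c : X →₀ ℂ, ⟪b c, q⟫_ℂ = 0 := by
        intro c
        rw [hb, Finsupp.linearCombination_apply, Finsupp.sum, sum_inner]
        refine Finset.sum_eq_zero fun x _ => ?_
        rw [inner_smul_left, hκq, hpt, mul_zero]
      rw [Submodule.mem_orthogonal]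
      rintro u ⟨f, rfl⟩
      have key : ∀ f : H₀, ⟪U f, q⟫_ℂ = 0 := by
        intro f
        refine h_dense.induction_on f
          (isClosed_eq (Continuous.inner U.continuous continuous_const) continuous_const) ?_
        intro d
        have h2 : U (D.subtypeL d) = f₀ d := hU_d d
        rw [h2]
        obtain ⟨v, hv⟩ := d
        obtain ⟨c, rfl⟩ := hv
        rw [hf₀ c]
        exact hbq c
      exact key f
  · intro p
    show ‖(WithLp.equiv 2 (H₁ × H₂)).symm (p.fst, -p.snd)‖ = ‖p‖
    have h2 := WithLp.prod_norm_sq_eq_of_L2 ((WithLp.equiv 2 (H₁ × H₂)).symm (p.fst, -p.snd))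
    have h3 := WithLp.prod_norm_sq_eq_of_L2 p
    rw [show ((WithLp.equiv 2 (H₁ × H₂)).symm (p.fst, -p.snd)).fst = p.fst from rfl,
      show ((WithLp.equiv 2 (H₁ × H₂)).symm (p.fst, -p.snd)).snd = -p.snd from rfl, norm_neg] at h2
    nlinarith [norm_nonneg ((WithLp.equiv 2 (H₁ × H₂)).symm (p.fst, -p.snd)), norm_nonneg p]
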